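/- arXiv:2205.09412 — 2 statements merged into one kernel-verified Lean document; each statement's English description precedes it below -/
import Mathlib

section
/- Let ḡ be lower semicontinuous, symmetric (ḡ(v)=ḡ(-v)), locally integrable and nonnegative, and let μ be a minimizer of the energy E among probability measures on ℝ^N with E(μ) < ∞ and compact support. Then the potential ψ_μ(x) = ∫ ḡ(y-x) dμ(y) satisfies ψ_μ(x) = E(μ) for μ-almost every x in the support of μ, and ψ_μ(x) ≥ E(μ) for Lebesgue-almost every x in ℝ^N. -/
open MeasureTheory
open scoped ENNReal

noncomputable def energy {N : ℕ} (g : EuclideanSpace ℝ (Fin N) → ℝ≥0∞)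
    (μ : Measure (EuclideanSpace ℝ (Fin N))) : ℝ≥0∞ :=
  ∫⁻ x, ∫⁻ y, g (y - x) ∂μ ∂μ

/-- The potential associated to a measure `μ`: `ψ_μ(x) = ∫ ḡ(y-x) dμ(y)`. -/
noncomputable def potential {N : ℕ} (g : EuclideanSpace ℝ (Fin N) → ℝ≥0∞)
    (μ : Measure (EuclideanSpace ℝ (Fin N))) (x : EuclideanSpace ℝ (Fin N)) : ℝ≥0∞ :=
  ∫⁻ y, g (y - x) ∂μ

/-- The support of a measure. -/
def msupp {N : ℕ} (μ : Measure (EuclideanSpace ℝ (Fin N))) :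
    Set (EuclideanSpace ℝ (Fin N)) :=
  {x | ∀ U : Set (EuclideanSpace ℝ (Fin N)), IsOpen U → x ∈ U → μ U ≠ 0}

/-! ### Auxiliary lemmas -/

namespace PotentialAux

open Metric Set

variable {N : ℕ}

local notation "Euc" => EuclideanSpace ℝ (Fin N)

lemma measurable_potential (g : Euc → ℝ≥0∞) (hg : Measurable g)
    (μ : Measure Euc) [SFinite μ] : Measurable (potential g μ) := by
  apply Measurable.lintegral_prod_right
  exact hg.comp (measurable_snd.sub measurable_fst)

lemma energy_eq (g : Euc → ℝ≥0∞) (μ : Measure Euc) :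
    energy g μ = ∫⁻ x, potential g μ x ∂μ := rfl

/-- Cross term symmetry. -/
lemma cross_symm (g : Euc → ℝ≥0∞) (hg : Measurable g)
    (hsym : ∀ v : Euc, g (-v) = g v)
    (μ ν : Measure Euc) [SFinite μ] [SFinite ν] :
    ∫⁻ x, potential g ν x ∂μ = ∫⁻ x, potential g μ x ∂ν := by
  have hm : AEMeasurable (Function.uncurry fun x y => g (y - x)) (μ.prod ν) :=
    (hg.comp (measurable_snd.sub measurable_fst)).aemeasurable
  calc ∫⁻ x, potential g ν x ∂μ = ∫⁻ x, ∫⁻ y, g (y - x) ∂ν ∂μ := rfl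
    _ = ∫⁻ y, ∫⁻ x, g (y - x) ∂μ ∂ν := lintegral_lintegral_swap hm
    _ = ∫⁻ y, ∫⁻ x, g (x - y) ∂μ ∂ν := by
        congr 1; ext y; congr 1; ext x; rw [← hsym (x - y), neg_sub]
    _ = ∫⁻ x, potential g μ x ∂ν := rfl

/-- Bilinear expansion of the energy of a convex combination. -/
lemma energy_expand (g : Euc → ℝ≥0∞) (hg : Measurable g)
    (μ ν : Measure Euc) [SFinite μ] [SFinite ν] (s t : ℝ≥0∞) :
    energy g (s • μ + t • ν)
      = s * (s * energy g μ + t * (∫⁻ x, potential g ν x ∂μ))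
        + t * (s * (∫⁻ x, potential g μ x ∂ν) + t * energy g ν) := by
  have hmμ : Measurable (potential g μ) := measurable_potential g hg μ
  have hmν : Measurable (potential g ν) := measurable_potential g hg ν
  have hinner : ∀ x : Euc, ∫⁻ y, g (y - x) ∂(s • μ + t • ν)
      = s * potential g μ x + t * potential g ν x := by
    intro x
    rw [lintegral_add_measure, lintegral_smul_measure, lintegral_smul_measure]
    rfl
  have key : ∀ ρ : Measure Euc,
      ∫⁻ x, (s * potential g μ x + t * potential g ν x) ∂ρ
        = s * ∫⁻ x, potential g μ x ∂ρ + t * ∫⁻ x, potential g ν x ∂ρ := by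
    intro ρ
    rw [lintegral_add_left (hmμ.const_mul s), lintegral_const_mul s hmμ,
      lintegral_const_mul t hmν]
  calc energy g (s • μ + t • ν)
      = ∫⁻ x, (s * potential g μ x + t * potential g ν x) ∂(s • μ + t • ν) := by
        unfold energy; exact lintegral_congr hinner
    _ = s * ∫⁻ x, (s * potential g μ x + t * potential g ν x) ∂μ
        + t * ∫⁻ x, (s * potential g μ x + t * potential g ν x) ∂ν := by
        rw [lintegral_add_measure, lintegral_smul_measure, lintegral_smul_measure, smul_eq_mul,
          smul_eq_mul]
    _ = _ := by rw [key μ, key ν, energy_eq, energy_eq]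

/-- Real-number core of the perturbation argument. -/
lemma real_core {A B C : ℝ} (hA : 0 ≤ A) (hB : 0 ≤ B) (hC : 0 ≤ C)
    (h : ∀ ε : ℝ, 0 < ε → ε < 1 →
      A ≤ (1 - ε) * ((1 - ε) * A + ε * B) + ε * ((1 - ε) * B + ε * C)) :
    A ≤ B := by
  by_contra hlt
  push_neg at hlt
  set ε : ℝ := min (1/2) ((A - B) / (A + C + 1)) with hε
  have hd : 0 < (A - B) / (A + C + 1) := div_pos (by linarith) (by linarith)
  have hε0 : 0 < ε := lt_min (by norm_num) hd
  have hε1 : ε < 1 := lt_of_le_of_lt (min_le_left _ _) (by norm_num)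
  have h1 := h ε hε0 hε1
  have h2 : ε * (A + C + 1) ≤ A - B := by
    calc ε * (A + C + 1) ≤ ((A - B) / (A + C + 1)) * (A + C + 1) := by
          apply mul_le_mul_of_nonneg_right (min_le_right _ _) (by linarith)
      _ = A - B := div_mul_cancel₀ _ (by linarith)
  nlinarith [sq_nonneg ε, mul_nonneg hε0.le hB, mul_nonneg hε0.le hA,
    mul_nonneg hε0.le hC, mul_nonneg (mul_nonneg hε0.le hε0.le) hB]

/-- The key first-variation inequality for a minimizer. -/
lemma key_ineq (g : Euc → ℝ≥0∞) (hg : Measurable g)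
    (hsym : ∀ v : Euc, g (-v) = g v)
    (μ : Measure Euc) [IsProbabilityMeasure μ]
    (hmin : ∀ ρ : Measure Euc, IsProbabilityMeasure ρ → energy g μ ≤ energy g ρ)
    (hfin : energy g μ ≠ ⊤)
    (ν : Measure Euc) [IsProbabilityMeasure ν] (hfinν : energy g ν ≠ ⊤) :
    energy g μ ≤ ∫⁻ x, potential g μ x ∂ν := by
  set a := energy g μ with ha
  set b := ∫⁻ x, potential g μ x ∂ν with hb
  set c := energy g ν with hc
  rcases eq_or_ne b ⊤ with hbT | hbT
  · exact hbT ▸ le_top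
  have hcross : ∫⁻ x, potential g ν x ∂μ = b := cross_symm g hg hsym μ ν
  have hstep : ∀ ε : ℝ, 0 < ε → ε < 1 →
      a ≤ (1 - ENNReal.ofReal ε) * ((1 - ENNReal.ofReal ε) * a + ENNReal.ofReal ε * b)
        + ENNReal.ofReal ε * ((1 - ENNReal.ofReal ε) * b + ENNReal.ofReal ε * c) := by
    intro ε hε0 hε1
    set t : ℝ≥0∞ := ENNReal.ofReal ε with ht
    have ht1 : t ≤ 1 := by
      rw [ht, ← ENNReal.ofReal_one]
      exact ENNReal.ofReal_le_ofReal hε1.le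
    have hprob : IsProbabilityMeasure ((1 - t) • μ + t • ν) := by
      constructor
      simp only [Measure.coe_add, Measure.coe_smul, Pi.add_apply, Pi.smul_apply,
        smul_eq_mul, measure_univ, mul_one]
      exact tsub_add_cancel_of_le ht1
    have := hmin _ hprob
    rw [energy_expand g hg μ ν (1 - t) t, hcross, ← hb, ← ha, ← hc] at this
    exact this
  have haT : a ≠ ⊤ := hfin
  have h1 : ∀ ε : ℝ, 0 < ε → ε < 1 →
      a.toReal ≤ (1 - ε) * ((1 - ε) * a.toReal + ε * b.toReal)
        + ε * ((1 - ε) * b.toReal + ε * c.toReal) := by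
    intro ε hε0 hε1
    have h := hstep ε hε0 hε1
    have h1t : (1 : ℝ≥0∞) - ENNReal.ofReal ε = ENNReal.ofReal (1 - ε) := by
      rw [← ENNReal.ofReal_one, ← ENNReal.ofReal_sub _ hε0.le]
    rw [h1t] at h
    have hRHS : ((ENNReal.ofReal (1 - ε)) * ((ENNReal.ofReal (1 - ε)) * a + ENNReal.ofReal ε * b)
        + ENNReal.ofReal ε * ((ENNReal.ofReal (1 - ε)) * b + ENNReal.ofReal ε * c)) ≠ ⊤ := by
      apply ENNReal.add_ne_top.2
      constructor <;>
      · apply ENNReal.mul_ne_top ENNReal.ofReal_ne_top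
        apply ENNReal.add_ne_top.2
        exact ⟨ENNReal.mul_ne_top ENNReal.ofReal_ne_top (by assumption),
          ENNReal.mul_ne_top ENNReal.ofReal_ne_top (by assumption)⟩
    have := ENNReal.toReal_mono hRHS h
    rw [ENNReal.toReal_add, ENNReal.toReal_mul, ENNReal.toReal_mul,
      ENNReal.toReal_add, ENNReal.toReal_add, ENNReal.toReal_mul, ENNReal.toReal_mul,
      ENNReal.toReal_mul, ENNReal.toReal_mul, ENNReal.toReal_ofReal hε0.le,
      ENNReal.toReal_ofReal (by linarith : (0:ℝ) ≤ 1 - ε)] at this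
    · exact this
    all_goals first
      | exact ENNReal.mul_ne_top ENNReal.ofReal_ne_top (by assumption)
      | exact ENNReal.add_ne_top.2 ⟨ENNReal.mul_ne_top ENNReal.ofReal_ne_top (by assumption),
          ENNReal.mul_ne_top ENNReal.ofReal_ne_top (by assumption)⟩
      | exact ENNReal.mul_ne_top ENNReal.ofReal_ne_top
          (ENNReal.add_ne_top.2 ⟨ENNReal.mul_ne_top ENNReal.ofReal_ne_top (by assumption),
            ENNReal.mul_ne_top ENNReal.ofReal_ne_top (by assumption)⟩)
  have hAB : a.toReal ≤ b.toReal :=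
    real_core ENNReal.toReal_nonneg ENNReal.toReal_nonneg ENNReal.toReal_nonneg h1
  exact (ENNReal.toReal_le_toReal haT hbT).1 hAB

/-- Translation bound for set integrals of the kernel, fixed first argument. -/
lemma inner_bound (g : Euc → ℝ≥0∞) (hg : Measurable g) (y : Euc) {s : Set Euc} {D : Set Euc}
    (hD : MeasurableSet D) (hsub : ∀ x ∈ s, y - x ∈ D) :
    ∫⁻ x in s, g (y - x) ∂volume ≤ ∫⁻ z in D, g z ∂volume := by
  have h1 : ∫⁻ x in s, g (y - x) ∂volume ≤ ∫⁻ x in s, D.indicator g (y - x) ∂volume := by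
    have hm : Measurable (fun x : Euc => D.indicator g (y - x)) :=
      (hg.indicator hD).comp (measurable_const.sub measurable_id)
    apply setLIntegral_mono hm
    intro x hx
    exact (Set.indicator_of_mem (hsub x hx) g).symm.le
  have h2 : ∫⁻ x in s, D.indicator g (y - x) ∂volume ≤ ∫⁻ x, D.indicator g (y - x) ∂volume :=
    setLIntegral_le_lintegral _ _
  have h3 : ∫⁻ x, D.indicator g (y - x) ∂volume = ∫⁻ z, D.indicator g z ∂volume :=
    (MeasureTheory.Measure.measurePreserving_sub_left volume y).lintegral_comp
      (hg.indicator hD)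
  have h4 : ∫⁻ z, D.indicator g z ∂volume = ∫⁻ z in D, g z ∂volume := lintegral_indicator hD g
  exact le_trans h1 (le_trans h2 (le_of_eq (h3.trans h4)))

/-- Translation bound for set integrals of the kernel, fixed second argument. -/
lemma inner_bound' (g : Euc → ℝ≥0∞) (hg : Measurable g) (x : Euc) {s D : Set Euc}
    (hD : MeasurableSet D) (hsub : ∀ y ∈ s, y - x ∈ D) :
    ∫⁻ y in s, g (y - x) ∂volume ≤ ∫⁻ z in D, g z ∂volume := by
  have h1 : ∫⁻ y in s, g (y - x) ∂volume ≤ ∫⁻ y in s, D.indicator g (y - x) ∂volume := by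
    have hm : Measurable (fun y : Euc => D.indicator g (y - x)) :=
      (hg.indicator hD).comp (measurable_id.sub measurable_const)
    apply setLIntegral_mono hm
    intro y hy
    exact (Set.indicator_of_mem (hsub y hy) g).symm.le
  have h2 : ∫⁻ y in s, D.indicator g (y - x) ∂volume ≤ ∫⁻ y, D.indicator g (y - x) ∂volume :=
    setLIntegral_le_lintegral _ _
  have h3 : ∫⁻ y, D.indicator g (y - x) ∂volume = ∫⁻ z, D.indicator g z ∂volume :=
    (MeasureTheory.measurePreserving_sub_right volume x).lintegral_comp (hg.indicator hD)
  have h4 : ∫⁻ z, D.indicator g z ∂volume = ∫⁻ z in D, g z ∂volume := lintegral_indicator hD g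
  exact le_trans h1 (le_trans h2 (le_of_eq (h3.trans h4)))

/-- The potential of a compactly supported probability measure is locally integrable. -/
lemma pot_locally_finite (g : Euc → ℝ≥0∞) (hg : Measurable g)
    (hloc : ∀ K : Set Euc, IsCompact K → ∫⁻ x in K, g x ∂volume < ⊤)
    (μ : Measure Euc) [IsProbabilityMeasure μ]
    {K : Set Euc} (hK : IsCompact K) (hKc : μ Kᶜ = 0) (R : ℝ) :
    ∫⁻ x in closedBall 0 R, potential g μ x ∂volume < ⊤ := by
  obtain ⟨C, hC⟩ := hK.isBounded.subset_closedBall 0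
  set D : Set Euc := closedBall 0 (C + R) with hD
  have hDc : IsCompact D := isCompact_closedBall _ _
  have hCD := hloc D hDc
  have hswap : ∫⁻ x in closedBall 0 R, potential g μ x ∂volume
      = ∫⁻ y, ∫⁻ x in closedBall 0 R, g (y - x) ∂volume ∂μ := by
    unfold potential
    exact lintegral_lintegral_swap ((hg.comp (measurable_snd.sub measurable_fst)).aemeasurable)
  rw [hswap]
  have hbound : ∀ᵐ y ∂μ, (∫⁻ x in closedBall 0 R, g (y - x) ∂volume) ≤ ∫⁻ z in D, g z ∂volume := by
    have hKae : ∀ᵐ y ∂μ, y ∈ K := by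
      rw [MeasureTheory.ae_iff]
      exact hKc
    filter_upwards [hKae] with y hy
    apply inner_bound g hg y measurableSet_closedBall
    intro x hx
    rw [mem_closedBall, dist_zero_right]
    have hyC : ‖y‖ ≤ C := by
      have := hC hy; rwa [mem_closedBall, dist_zero_right] at this
    have hxR : ‖x‖ ≤ R := by rwa [mem_closedBall, dist_zero_right] at hx
    calc ‖y - x‖ ≤ ‖y‖ + ‖x‖ := norm_sub_le _ _
      _ ≤ C + R := add_le_add hyC hxR
  calc ∫⁻ y, ∫⁻ x in closedBall 0 R, g (y - x) ∂volume ∂μ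
      ≤ ∫⁻ _, ∫⁻ z in D, g z ∂volume ∂μ := lintegral_mono_ae hbound
    _ = ∫⁻ z in D, g z ∂volume := by rw [lintegral_const, measure_univ, mul_one]
    _ < ⊤ := hCD

section BallMeasure

/-- Uniform probability measure on a closed ball. -/
noncomputable def ballMeasure (z : Euc) (r : ℝ) : Measure Euc :=
  (volume (closedBall z r))⁻¹ • (volume : Measure Euc).restrict (closedBall z r)

lemma ballVol_ne_zero (z : Euc) {r : ℝ} (hr : 0 < r) : volume (closedBall z r) ≠ 0 :=
  (measure_closedBall_pos volume z hr).ne'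

lemma ballVol_ne_top (z : Euc) (r : ℝ) : volume (closedBall z r) ≠ ⊤ :=
  (isCompact_closedBall z r).measure_lt_top.ne

instance ballMeasure_prob (z : Euc) (r : ℝ) [Fact (0 < r)] :
    IsProbabilityMeasure (ballMeasure (N := N) z r) := by
  constructor
  rw [ballMeasure, Measure.smul_apply, Measure.restrict_apply MeasurableSet.univ,
    Set.univ_inter, smul_eq_mul]
  exact ENNReal.inv_mul_cancel (ballVol_ne_zero z (Fact.out)) (ballVol_ne_top z r)

lemma lintegral_ballMeasure (f : Euc → ℝ≥0∞) (z : Euc) (r : ℝ) :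
    ∫⁻ x, f x ∂(ballMeasure (N := N) z r)
      = (volume (closedBall z r))⁻¹ * ∫⁻ x in closedBall z r, f x ∂volume := by
  simp only [ballMeasure, lintegral_smul_measure, smul_eq_mul]

lemma energy_ballMeasure_ne_top (g : Euc → ℝ≥0∞) (hg : Measurable g)
    (hloc : ∀ K : Set Euc, IsCompact K → ∫⁻ x in K, g x ∂volume < ⊤)
    (z : Euc) {r : ℝ} (hr : 0 < r) :
    energy g (ballMeasure (N := N) z r) ≠ ⊤ := by
  set B := closedBall z r with hB
  set v := volume B with hv
  have hv0 : v ≠ 0 := ballVol_ne_zero z hr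
  have hvT : v ≠ ⊤ := ballVol_ne_top z r
  set D : Set Euc := closedBall 0 (2 * r) with hD
  set C := ∫⁻ w in D, g w ∂volume with hC
  have hCT : C ≠ ⊤ := (hloc D (isCompact_closedBall _ _)).ne
  have hinner : ∀ x ∈ B, ∫⁻ y in B, g (y - x) ∂volume ≤ C := by
    intro x hx
    apply inner_bound' g hg x measurableSet_closedBall
    intro y hy
    rw [mem_closedBall, dist_zero_right]
    calc ‖y - x‖ = dist y x := (dist_eq_norm y x).symm
      _ ≤ dist y z + dist z x := dist_triangle y z x
      _ ≤ r + r := add_le_add (mem_closedBall.1 hy) (by rw [dist_comm]; exact mem_closedBall.1 hx)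
      _ = 2 * r := by ring
  have hexp : energy g (ballMeasure (N := N) z r)
      = v⁻¹ * ∫⁻ x in B, (v⁻¹ * ∫⁻ y in B, g (y - x) ∂volume) ∂volume := by
    unfold energy
    simp only [ballMeasure, lintegral_smul_measure, smul_eq_mul]
    rfl
  rw [hexp]
  have hle : ∫⁻ x in B, (v⁻¹ * ∫⁻ y in B, g (y - x) ∂volume) ∂volume ≤ (v⁻¹ * C) * v := by
    calc ∫⁻ x in B, (v⁻¹ * ∫⁻ y in B, g (y - x) ∂volume) ∂volume
        ≤ ∫⁻ _ in B, v⁻¹ * C ∂volume := by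
          apply setLIntegral_mono' measurableSet_closedBall
          intro x hx
          exact mul_le_mul_right (hinner x hx) _
      _ = (v⁻¹ * C) * v := by rw [setLIntegral_const]
  refine ne_top_of_le_ne_top ?_ (mul_le_mul_right hle _)
  exact ENNReal.mul_ne_top (ENNReal.inv_ne_top.2 hv0)
    (ENNReal.mul_ne_top (ENNReal.mul_ne_top (ENNReal.inv_ne_top.2 hv0) hCT) hvT)

end BallMeasure

end PotentialAux

/-- For a l.s.c., symmetric, locally integrable kernel `ḡ ≥ 0` and a minimizer `μ`
of the energy among probability measures, with finite energy and compact support,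
the potential equals `E(μ)` for `μ`-a.e. point of the support, and is `≥ E(μ)`
Lebesgue-a.e. on `ℝ^N`. -/
theorem potential_ae_eq_energy {N : ℕ}
    (g : EuclideanSpace ℝ (Fin N) → ℝ≥0∞)
    (hlsc : LowerSemicontinuous g)
    (hsym : ∀ v : EuclideanSpace ℝ (Fin N), g (-v) = g v)
    (hloc : ∀ K : Set (EuclideanSpace ℝ (Fin N)), IsCompact K → ∫⁻ x in K, g x ∂volume < ⊤)
    (μ : Measure (EuclideanSpace ℝ (Fin N))) (hμ : IsProbabilityMeasure μ)
    (hmin : ∀ ν : Measure (EuclideanSpace ℝ (Fin N)), IsProbabilityMeasure ν →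
      energy g μ ≤ energy g ν)
    (hfin : energy g μ < ⊤)
    (hcpt : ∃ K : Set (EuclideanSpace ℝ (Fin N)), IsCompact K ∧ μ Kᶜ = 0) :
    (∀ᵐ x ∂μ, x ∈ msupp μ → potential g μ x = energy g μ) ∧
    (∀ᵐ x ∂(volume : Measure (EuclideanSpace ℝ (Fin N))),
      energy g μ ≤ potential g μ x) := by
  classical
  open PotentialAux Metric Set in
  have hg : Measurable g := hlsc.measurable
  obtain ⟨K, hK, hKc⟩ := hcpt
  have haT : energy g μ ≠ ⊤ := hfin.ne
  have hψm : Measurable (potential g μ) := PotentialAux.measurable_potential g hg μ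
  -- average over any closed ball dominates the energy
  have hball : ∀ (z : EuclideanSpace ℝ (Fin N)) (r : ℝ), 0 < r →
      energy g μ * volume (Metric.closedBall z r)
        ≤ ∫⁻ x in Metric.closedBall z r, potential g μ x ∂volume := by
    intro z r hr
    haveI : Fact (0 < r) := ⟨hr⟩
    have h1 : energy g μ ≤ ∫⁻ x, potential g μ x ∂(PotentialAux.ballMeasure z r) :=
      PotentialAux.key_ineq g hg hsym μ hmin haT _
        (PotentialAux.energy_ballMeasure_ne_top g hg hloc z hr)
    rw [PotentialAux.lintegral_ballMeasure, ← ENNReal.div_eq_inv_mul] at h1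
    exact (ENNReal.le_div_iff_mul_le (Or.inl (PotentialAux.ballVol_ne_zero z hr))
      (Or.inl (PotentialAux.ballVol_ne_top z r))).1 h1
  -- Part 2 : Lebesgue-a.e. lower bound via differentiation
  have part2 : ∀ᵐ x ∂(volume : Measure (EuclideanSpace ℝ (Fin N))),
      energy g μ ≤ potential g μ x := by
    have hn : ∀ n : ℕ, ∀ᵐ x ∂(volume : Measure (EuclideanSpace ℝ (Fin N))),
        x ∈ Metric.ball (0 : EuclideanSpace ℝ (Fin N)) (n : ℝ) →
          energy g μ ≤ potential g μ x := by
      intro n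
      set f := (Metric.ball (0 : EuclideanSpace ℝ (Fin N)) (n : ℝ)).indicator (potential g μ)
        with hf
      have hfm : Measurable f := hψm.indicator measurableSet_ball
      have hfint : ∫⁻ x, f x ∂volume ≠ ⊤ := by
        rw [hf, lintegral_indicator measurableSet_ball]
        refine (lt_of_le_of_lt ?_
          (PotentialAux.pot_locally_finite g hg hloc μ hK hKc n)).ne
        exact lintegral_mono_set Metric.ball_subset_closedBall
      have hbes := (Besicovitch.vitaliFamily
        (volume : Measure (EuclideanSpace ℝ (Fin N)))).ae_tendsto_lintegral_div
        hfm.aemeasurable hfint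
      filter_upwards [hbes] with x hx hxball
      have hx' := hx.comp (Besicovitch.tendsto_filterAt
        (volume : Measure (EuclideanSpace ℝ (Fin N))) x)
      have hfx : f x = potential g μ x := Set.indicator_of_mem hxball _
      have hev : ∀ᶠ r in nhdsWithin (0:ℝ) (Set.Ioi 0),
          energy g μ ≤ (∫⁻ y in Metric.closedBall x r, f y ∂volume)
            / volume (Metric.closedBall x r) := by
        have hδ : 0 < (n : ℝ) - dist x 0 := by
          rw [Metric.mem_ball] at hxball; linarith
        filter_upwards [Ioo_mem_nhdsGT_of_mem ⟨le_refl (0:ℝ), hδ⟩] with r hr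
        have hsub : Metric.closedBall x r ⊆
            Metric.ball (0 : EuclideanSpace ℝ (Fin N)) (n : ℝ) := by
          intro y hy
          rw [Metric.mem_ball]
          calc dist y 0 ≤ dist y x + dist x 0 := dist_triangle y x 0
            _ ≤ r + dist x 0 := add_le_add_left (Metric.mem_closedBall.1 hy) _
            _ < n := by
                rcases hr with ⟨hr1, hr2⟩
                linarith
        have heq : ∫⁻ y in Metric.closedBall x r, f y ∂volume
            = ∫⁻ y in Metric.closedBall x r, potential g μ y ∂volume :=
          setLIntegral_congr_fun measurableSet_closedBall
            (fun y hy => Set.indicator_of_mem (hsub hy) _)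
        rw [heq, ENNReal.le_div_iff_mul_le
          (Or.inl (PotentialAux.ballVol_ne_zero x hr.1))
          (Or.inl (PotentialAux.ballVol_ne_top x r))]
        exact hball x r hr.1
      have := ge_of_tendsto hx' hev
      rwa [hfx] at this
    rw [← ae_all_iff] at hn
    filter_upwards [hn] with x hx
    obtain ⟨n, hn'⟩ := exists_nat_gt (dist x 0)
    exact hx n (Metric.mem_ball.2 hn')
  -- Part 1 : μ-a.e. equality
  have hnull : ∀ n : ℕ,
      μ {x | potential g μ x + ((n : ℝ≥0∞) + 1)⁻¹ ≤ energy g μ} = 0 := by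
    intro n
    set ε : ℝ≥0∞ := ((n : ℝ≥0∞) + 1)⁻¹ with hεdef
    have hε0 : ε ≠ 0 := ENNReal.inv_ne_zero.2 (by simp)
    set A := {x | potential g μ x + ε ≤ energy g μ} with hA
    have hAm : MeasurableSet A := measurableSet_le (hψm.add_const ε) measurable_const
    by_contra hA0
    have hA1 : μ A ≠ ⊤ := (measure_lt_top μ A).ne
    have hνp : IsProbabilityMeasure ((μ A)⁻¹ • μ.restrict A) := by
      constructor
      rw [Measure.smul_apply, Measure.restrict_apply MeasurableSet.univ,
        Set.univ_inter, smul_eq_mul]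
      exact ENNReal.inv_mul_cancel hA0 hA1
    have hpotres : ∫⁻ x, potential g (μ.restrict A) x ∂(μ.restrict A) ≤ energy g μ := by
      refine le_trans (lintegral_mono' Measure.restrict_le_self (fun x => ?_)) le_rfl
      exact lintegral_mono' Measure.restrict_le_self le_rfl
    have hνfin : energy g ((μ A)⁻¹ • μ.restrict A) ≠ ⊤ := by
      have hexp : energy g ((μ A)⁻¹ • μ.restrict A)
          = (μ A)⁻¹ * ∫⁻ x, ((μ A)⁻¹ * ∫⁻ y, g (y - x) ∂(μ.restrict A)) ∂(μ.restrict A) := by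
        unfold energy
        simp only [lintegral_smul_measure, smul_eq_mul]
      have hfmeas : Measurable (fun x : EuclideanSpace ℝ (Fin N) =>
          ∫⁻ y in A, g (y - x) ∂μ) := PotentialAux.measurable_potential g hg (μ.restrict A)
      rw [hexp, lintegral_const_mul _ hfmeas]
      have hb : (μ A)⁻¹ * ((μ A)⁻¹ * ∫⁻ x, potential g (μ.restrict A) x ∂(μ.restrict A))
          ≤ (μ A)⁻¹ * ((μ A)⁻¹ * energy g μ) :=
        mul_le_mul_right (mul_le_mul_right hpotres _) _
      refine ne_top_of_le_ne_top ?_ hb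
      exact ENNReal.mul_ne_top (ENNReal.inv_ne_top.2 hA0)
        (ENNReal.mul_ne_top (ENNReal.inv_ne_top.2 hA0) haT)
    have h1 : energy g μ ≤ ∫⁻ x, potential g μ x ∂((μ A)⁻¹ • μ.restrict A) :=
      PotentialAux.key_ineq g hg hsym μ hmin haT _ hνfin
    rw [lintegral_smul_measure, smul_eq_mul, ← ENNReal.div_eq_inv_mul] at h1
    have h1' : energy g μ * μ A ≤ ∫⁻ x in A, potential g μ x ∂μ :=
      (ENNReal.le_div_iff_mul_le (Or.inl hA0) (Or.inl hA1)).1 h1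
    have h2 : ∫⁻ x in A, potential g μ x ∂μ + ε * μ A ≤ energy g μ * μ A := by
      have e1 : ∫⁻ x in A, potential g μ x ∂μ + ε * μ A
          = ∫⁻ x in A, (potential g μ x + ε) ∂μ := by
        rw [lintegral_add_right _ measurable_const, setLIntegral_const]
      rw [e1]
      calc ∫⁻ x in A, (potential g μ x + ε) ∂μ
          ≤ ∫⁻ _ in A, energy g μ ∂μ := setLIntegral_mono' hAm (fun x hx => hx)
        _ = energy g μ * μ A := by rw [setLIntegral_const]
    have h3 : energy g μ * μ A + ε * μ A ≤ energy g μ * μ A + 0 := by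
      rw [add_zero]
      exact le_trans (add_le_add_left h1' _) h2
    have hfinμA : energy g μ * μ A ≠ ⊤ := ENNReal.mul_ne_top haT hA1
    have h4 : ε * μ A = 0 :=
      le_antisymm (by exact_mod_cast (ENNReal.add_le_add_iff_left hfinμA).1 h3) zero_le
    exact hA0 ((mul_eq_zero.1 h4).resolve_left hε0)
  have hge : ∀ᵐ x ∂μ, energy g μ ≤ potential g μ x := by
    have hcup : {x | potential g μ x < energy g μ}
        ⊆ ⋃ n : ℕ, {x | potential g μ x + ((n : ℝ≥0∞) + 1)⁻¹ ≤ energy g μ} := by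
      intro x hx
      have hψx : potential g μ x < energy g μ := hx
      have h0 : energy g μ - potential g μ x ≠ 0 := (tsub_pos_iff_lt.2 hψx).ne'
      obtain ⟨m, hm⟩ := ENNReal.exists_inv_nat_lt h0
      refine Set.mem_iUnion.2 ⟨m, ?_⟩
      show potential g μ x + ((m : ℝ≥0∞) + 1)⁻¹ ≤ energy g μ
      have hinv : ((m : ℝ≥0∞) + 1)⁻¹ ≤ ((m : ℝ≥0∞))⁻¹ :=
        ENNReal.inv_le_inv.2 le_self_add
      calc potential g μ x + ((m : ℝ≥0∞) + 1)⁻¹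
          ≤ potential g μ x + ((m : ℝ≥0∞))⁻¹ := add_le_add_right hinv _
        _ ≤ potential g μ x + (energy g μ - potential g μ x) := add_le_add_right hm.le _
        _ = energy g μ := add_tsub_cancel_of_le hψx.le
    have hnull2 : μ {x | potential g μ x < energy g μ} = 0 :=
      measure_mono_null hcup (measure_iUnion_null hnull)
    rw [MeasureTheory.ae_iff]
    simpa [not_le] using hnull2
  have hle : ∀ᵐ x ∂μ, potential g μ x ≤ energy g μ := by
    have hconst : ∫⁻ _, energy g μ ∂μ = energy g μ := by
      rw [lintegral_const, measure_univ, mul_one]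
    have hsub : ∫⁻ x, (potential g μ x - energy g μ) ∂μ = 0 := by
      rw [lintegral_sub measurable_const (by rw [hconst]; exact haT) hge,
        hconst]
      exact tsub_self _
    have := (lintegral_eq_zero_iff (hψm.sub measurable_const)).1 hsub
    filter_upwards [this] with x hx
    exact tsub_eq_zero_iff_le.1 hx
  refine ⟨?_, part2⟩
  filter_upwards [hge, hle] with x h1 h2 _
  exact le_antisymm h2 h1
end

section
/- Let g : (0,∞) → [0,∞) be decreasing on (0, 3ρ/ε) with g(t) t^α < 1/j for all 0 < t < 2ρ (where ρ is chosen so that g(3ρ/ε)(3ρ/ε)^α = 1/j). Then ∫∫_{B_ρ × B_ρ} g(|y-x|) dy dx < (3^α 2^{N-α} N ω_N² ρ^{2N} / (ε^α (N-α))) · g(3ρ/ε), where 0 < α < N and ω_N is the volume of the unit ball in ℝ^N. -/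
open MeasureTheory
open scoped ENNReal
open Metric Set

open MeasureTheory Metric Set
open scoped ENNReal

section Aux

local notation "dim" => Module.finrank ℝ

variable {E : Type*} [NormedAddCommGroup E] [NormedSpace ℝ E]
  [MeasurableSpace E] [BorelSpace E]
  [Nontrivial E] (μ : Measure E) [FiniteDimensional ℝ E] [μ.IsAddHaarMeasure]

lemma lintegral_fun_norm_addHaar' (f : ℝ → ℝ≥0∞) (hf : Measurable f) :
    ∫⁻ x, f ‖x‖ ∂μ = (dim E) * μ (ball 0 1) *
      ∫⁻ y in Set.Ioi (0 : ℝ), ENNReal.ofReal (y ^ (dim E - 1)) * f y := by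
  have h1 : ∫⁻ x, f ‖x‖ ∂μ = ∫⁻ x : ({(0)}ᶜ : Set E), f (‖x.1‖) ∂(μ.comap (↑)) := by
    rw [lintegral_subtype_comap (measurableSet_singleton (0:E)).compl (fun x => f ‖x‖),
      restrict_compl_singleton]
  have h2 : ∫⁻ x : ({(0)}ᶜ : Set E), f (‖x.1‖) ∂(μ.comap (↑))
      = ∫⁻ x : sphere (0 : E) 1 × Set.Ioi (0 : ℝ), f x.2
          ∂(μ.toSphere.prod (.volumeIoiPow (dim E - 1))) :=
    by
      convert μ.measurePreserving_homeomorphUnitSphereProd.lintegral_comp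
        ((hf.comp measurable_subtype_coe).comp measurable_snd) using 3 with x
      simp [homeomorphUnitSphereProd]
      rfl
  have h3 : ∫⁻ x : sphere (0 : E) 1 × Set.Ioi (0 : ℝ), f x.2
          ∂(μ.toSphere.prod (.volumeIoiPow (dim E - 1)))
      = μ.toSphere Set.univ * ∫⁻ y : Set.Ioi (0:ℝ), f y ∂(Measure.volumeIoiPow (dim E - 1)) := by
    rw [lintegral_prod (fun z : (sphere (0:E) 1) × (Set.Ioi (0:ℝ)) => f z.2.1)
      (((hf.comp measurable_subtype_coe).comp measurable_snd).aemeasurable)]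
    simp [lintegral_const, mul_comm]
  have h4 : ∫⁻ y : Set.Ioi (0:ℝ), f y ∂(Measure.volumeIoiPow (dim E - 1))
      = ∫⁻ y in Set.Ioi (0 : ℝ), ENNReal.ofReal (y ^ (dim E - 1)) * f y := by
    rw [Measure.volumeIoiPow,
      lintegral_withDensity_eq_lintegral_mul _
        (by exact (measurable_subtype_coe.pow_const _).ennreal_ofReal)
        (show Measurable (fun y : Set.Ioi (0:ℝ) => f y.1) from hf.comp measurable_subtype_coe)]
    rw [show ((fun r : Set.Ioi (0:ℝ) => ENNReal.ofReal (r.1 ^ (dim E - 1)))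
        * (fun y : Set.Ioi (0:ℝ) => f y.1))
      = fun y : Set.Ioi (0:ℝ) => ENNReal.ofReal (y.1 ^ (dim E - 1)) * f y.1 from rfl]
    rw [lintegral_subtype_comap measurableSet_Ioi
      (fun y => ENNReal.ofReal (y ^ (dim E - 1)) * f y)]
  rw [h1, h2, h3, h4, Measure.toSphere_apply_univ]


lemma lintegral_ball_rpow_neg {R c α : ℝ} (hR : 0 < R) (hc : 0 ≤ c) (hα : 0 < α)
    (hαd : α < dim E) :
    ∫⁻ x in ball (0 : E) R, ENNReal.ofReal (c * ‖x‖ ^ (-α)) ∂μ =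
      (dim E) * μ (ball 0 1) *
        ENNReal.ofReal (c * R ^ ((dim E : ℝ) - α) / ((dim E : ℝ) - α)) := by
  set n := dim E with hn
  have hn1 : 1 ≤ n := by
    have : 0 < (n : ℝ) := lt_trans hα hαd
    exact_mod_cast Nat.one_le_iff_ne_zero.2 (by exact_mod_cast this.ne')
  set f : ℝ → ℝ≥0∞ := Set.indicator (Iio R) (fun t => ENNReal.ofReal (c * t ^ (-α))) with hfdef
  have hfm : Measurable f := by
    apply Measurable.indicator _ measurableSet_Iio
    exact ((measurable_id.pow measurable_const).const_mul c).ennreal_ofReal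
  have h0 : ∫⁻ x in ball (0 : E) R, ENNReal.ofReal (c * ‖x‖ ^ (-α)) ∂μ = ∫⁻ x, f ‖x‖ ∂μ := by
    rw [← lintegral_indicator measurableSet_ball]
    congr 1; funext x
    by_cases hx : x ∈ ball (0:E) R
    · rw [Set.indicator_of_mem hx, hfdef,
        Set.indicator_of_mem (by simpa [mem_ball_zero_iff] using hx)]
    · rw [Set.indicator_of_notMem hx, hfdef,
        Set.indicator_of_notMem (by simpa [mem_ball_zero_iff] using hx)]
  set β : ℝ := (n : ℝ) - 1 - α with hβ
  have hβ1 : (-1 : ℝ) < β := by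
    have : (1:ℝ) ≤ (n:ℝ) := by exact_mod_cast hn1
    simp only [hβ]; linarith
  have h1 : ∫⁻ y in Set.Ioi (0 : ℝ), ENNReal.ofReal (y ^ (n - 1)) * f y
      = ∫⁻ y in Set.Ioo (0 : ℝ) R, ENNReal.ofReal (c * y ^ β) := by
    rw [← lintegral_indicator measurableSet_Ioi, ← lintegral_indicator measurableSet_Ioo]
    congr 1; funext y
    simp only [hfdef, Set.indicator_apply, Set.mem_Ioi, Set.mem_Ioo, Set.mem_Iio]
    by_cases hy : 0 < y
    · by_cases hyR : y < R
      · simp only [hy, hyR, and_self, if_true]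
        rw [← ENNReal.ofReal_mul (by positivity)]
        congr 1
        rw [show y ^ (n-1) * (c * y ^ (-α)) = c * (y ^ (n-1) * y ^ (-α)) by ring]
        congr 1
        rw [← Real.rpow_natCast y (n-1), ← Real.rpow_add hy]
        congr 1
        rw [Nat.cast_sub hn1]
        push_cast; ring
      · simp [hy, hyR]
    · simp [hy]
  have hInt : IntegrableOn (fun y => c * y ^ β) (Set.Ioo 0 R) := by
    refine Integrable.const_mul ?_ c
    have := intervalIntegral.intervalIntegrable_rpow' (a := 0) (b := R) hβ1
    rw [intervalIntegrable_iff_integrableOn_Ioo_of_le hR.le] at this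
    exact this
  have hne : β + 1 ≠ 0 := by
    have : (0:ℝ) < β + 1 := by linarith
    exact this.ne'
  have h2 : ∫⁻ y in Set.Ioo (0 : ℝ) R, ENNReal.ofReal (c * y ^ β)
      = ENNReal.ofReal (c * R ^ ((n : ℝ) - α) / ((n : ℝ) - α)) := by
    rw [← ofReal_integral_eq_lintegral_ofReal hInt]
    · congr 1
      rw [integral_const_mul]
      rw [← integral_Ioc_eq_integral_Ioo, ← intervalIntegral.integral_of_le hR.le,
        integral_rpow (Or.inl hβ1), Real.zero_rpow hne]
      rw [show β + 1 = (n:ℝ) - α by rw [hβ]; ring]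
      ring
    · filter_upwards [ae_restrict_mem measurableSet_Ioo] with y hy
      have hy1 := hy.1
      positivity
  rw [h0, lintegral_fun_norm_addHaar' μ f hfm, h1, h2]



end Aux

open Metric in
private def _auxEnd := 0


/-- Quantitative estimate of the self-interaction of a small ball:
if `g` is decreasing on `(0, 3ρ/ε)`, `g(t)t^α < 1/j` on `(0,2ρ)` and
`g(3ρ/ε)(3ρ/ε)^α = 1/j`, then
`∫∫_{B_ρ×B_ρ} g(|y-x|) < (3^α 2^{N-α} N ω_N² ρ^{2N} / (ε^α (N-α))) g(3ρ/ε)`. -/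
theorem ball_selfenergy_estimate {N : ℕ} (hN : 0 < N)
    (α : ℝ) (hα : 0 < α) (hαN : α < N)
    (ρ ε : ℝ) (hρ : 0 < ρ) (hε : 0 < ε)
    (j : ℕ) (hj : 0 < j)
    (g : ℝ → ℝ) (hpos : ∀ t, 0 ≤ g t)
    (hdec : AntitoneOn g (Set.Ioo (0 : ℝ) (3 * ρ / ε)))
    (hsmall : ∀ t ∈ Set.Ioo (0 : ℝ) (2 * ρ), g t * t ^ α < 1 / (j : ℝ))
    (heq : g (3 * ρ / ε) * (3 * ρ / ε) ^ α = 1 / (j : ℝ)) :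
    (∫⁻ x in Metric.ball (0 : EuclideanSpace ℝ (Fin N)) ρ,
      ∫⁻ y in Metric.ball (0 : EuclideanSpace ℝ (Fin N)) ρ,
        ENNReal.ofReal (g ‖y - x‖)) <
      ENNReal.ofReal
        ((3 : ℝ) ^ α * (2 : ℝ) ^ ((N : ℝ) - α) * N *
            (volume (Metric.ball (0 : EuclideanSpace ℝ (Fin N)) 1)).toReal ^ 2 *
            ρ ^ (2 * N) / (ε ^ α * ((N : ℝ) - α)) * g (3 * ρ / ε)) := by
  classical
  haveI : Nonempty (Fin N) := ⟨⟨0, hN⟩⟩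
  haveI : Nontrivial (EuclideanSpace ℝ (Fin N)) := inferInstance
  set E := EuclideanSpace ℝ (Fin N) with hE
  have hdim : Module.finrank ℝ E = N := finrank_euclideanSpace_fin
  set ω : ℝ≥0∞ := volume (ball (0 : E) 1) with hω
  have hω0 : ω ≠ 0 := (measure_ball_pos volume _ one_pos).ne'
  have hωt : ω ≠ ⊤ := measure_ball_lt_top.ne
  set c : ℝ := 1 / (j : ℝ) with hcdef
  have hc : 0 < c := by positivity
  have hNα : (0:ℝ) < (N:ℝ) - α := by linarith
  set I : ℝ → ℝ≥0∞ := fun R =>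
    (N : ℝ≥0∞) * ω * ENNReal.ofReal (c * R ^ ((N:ℝ) - α) / ((N:ℝ) - α)) with hIdef
  -- exact value of the model integral
  have hI : ∀ R : ℝ, 0 < R →
      (∫⁻ w in ball (0 : E) R, ENNReal.ofReal (c * ‖w‖ ^ (-α))) = I R := by
    intro R hR
    have := lintegral_ball_rpow_neg (E := E) volume (R := R) (c := c) (α := α)
      hR hc.le hα (by rw [hdim]; exact_mod_cast hαN)
    rw [this, hdim, hIdef]
  -- inner integral bound
  have hinner : ∀ x ∈ ball (0 : E) ρ,
      (∫⁻ y in ball (0 : E) ρ, ENNReal.ofReal (g ‖y - x‖)) ≤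
        ∫⁻ w in ball (0 : E) (ρ + ‖x‖), ENNReal.ofReal (c * ‖w‖ ^ (-α)) := by
    intro x hx
    have hx' : ‖x‖ < ρ := mem_ball_zero_iff.1 hx
    have step1 : (∫⁻ y in ball (0 : E) ρ, ENNReal.ofReal (g ‖y - x‖)) ≤
        ∫⁻ y in ball (0 : E) ρ, ENNReal.ofReal (c * ‖y - x‖ ^ (-α)) := by
      refine lintegral_mono_ae ?_
      have hne : ∀ᵐ y ∂(volume.restrict (ball (0 : E) ρ)), y ≠ x := by
        refine ae_restrict_of_ae ?_
        rw [ae_iff]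
        simpa using measure_singleton (μ := (volume : Measure E)) x
      filter_upwards [hne, ae_restrict_mem measurableSet_ball] with y hyx hy
      have h0t : 0 < ‖y - x‖ := by
        rw [norm_pos_iff, sub_ne_zero]; exact hyx
      have h2t : ‖y - x‖ < 2 * ρ := by
        have hy' : ‖y‖ < ρ := mem_ball_zero_iff.1 hy
        calc ‖y - x‖ ≤ ‖y‖ + ‖x‖ := norm_sub_le _ _
          _ < 2 * ρ := by linarith
      have hlt := hsmall _ ⟨h0t, h2t⟩
      apply ENNReal.ofReal_le_ofReal
      have hpow : 0 < ‖y - x‖ ^ α := Real.rpow_pos_of_pos h0t α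
      rw [Real.rpow_neg h0t.le, ← div_eq_mul_inv]
      exact le_of_lt ((lt_div_iff₀ hpow).2 hlt)
    have step2 : (∫⁻ y in ball (0 : E) ρ, ENNReal.ofReal (c * ‖y - x‖ ^ (-α))) ≤
        ∫⁻ y in ball x (ρ + ‖x‖), ENNReal.ofReal (c * ‖y - x‖ ^ (-α)) := by
      apply lintegral_mono_set
      intro y hy
      have hy' : ‖y‖ < ρ := mem_ball_zero_iff.1 hy
      rw [Metric.mem_ball, dist_eq_norm]
      calc ‖y - x‖ ≤ ‖y‖ + ‖x‖ := norm_sub_le _ _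
        _ < ρ + ‖x‖ := by linarith
    have step3 : (∫⁻ y in ball x (ρ + ‖x‖), ENNReal.ofReal (c * ‖y - x‖ ^ (-α))) =
        ∫⁻ w in ball (0 : E) (ρ + ‖x‖), ENNReal.ofReal (c * ‖w‖ ^ (-α)) := by
      have hpre : (fun y : E => y - x) ⁻¹' ball (0 : E) (ρ + ‖x‖) = ball x (ρ + ‖x‖) := by
        ext y
        simp [mem_ball_zero_iff, Metric.mem_ball, dist_eq_norm]
      have := (measurePreserving_sub_right (volume : Measure E) x).setLIntegral_comp_preimage_emb
        (MeasurableEquiv.subRight x).measurableEmbedding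
        (fun w => ENNReal.ofReal (c * ‖w‖ ^ (-α))) (ball (0 : E) (ρ + ‖x‖))
      rw [hpre] at this
      exact this
    exact le_trans step1 (le_trans step2 (le_of_eq step3))
  -- monotonicity of the model integral
  have hImono : ∀ r R : ℝ, r ≤ R →
      (∫⁻ w in ball (0 : E) r, ENNReal.ofReal (c * ‖w‖ ^ (-α))) ≤
        ∫⁻ w in ball (0 : E) R, ENNReal.ofReal (c * ‖w‖ ^ (-α)) :=
    fun r R hrR => lintegral_mono_set (Metric.ball_subset_ball hrR)
  set s : Set E := ball (0 : E) (ρ/2) with hs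
  set t : Set E := ball (0 : E) ρ with ht
  have hst : s ⊆ t := Metric.ball_subset_ball (by linarith)
  have hsplit : (∫⁻ x in t, ∫⁻ y in t, ENNReal.ofReal (g ‖y - x‖)) =
      (∫⁻ x in s, ∫⁻ y in t, ENNReal.ofReal (g ‖y - x‖)) +
      ∫⁻ x in t \ s, ∫⁻ y in t, ENNReal.ofReal (g ‖y - x‖) := by
    rw [← lintegral_union (measurableSet_ball.diff measurableSet_ball) disjoint_sdiff_right,
      Set.union_diff_cancel hst]
  have hbound1 : (∫⁻ x in s, ∫⁻ y in t, ENNReal.ofReal (g ‖y - x‖)) ≤ I (3*ρ/2) * volume s := by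
    calc (∫⁻ x in s, ∫⁻ y in t, ENNReal.ofReal (g ‖y - x‖))
        ≤ ∫⁻ _x in s, I (3*ρ/2) := by
          refine setLIntegral_mono measurable_const ?_
          intro x hxs
          have hx : x ∈ t := hst hxs
          have hx2 : ‖x‖ < ρ/2 := mem_ball_zero_iff.1 hxs
          refine le_trans (hinner x hx) ?_
          rw [← hI (3*ρ/2) (by linarith)]
          exact hImono _ _ (by linarith)
      _ = I (3*ρ/2) * volume s := setLIntegral_const s _
  have hbound2 : (∫⁻ x in t \ s, ∫⁻ y in t, ENNReal.ofReal (g ‖y - x‖)) ≤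
      I (2*ρ) * volume (t \ s) := by
    calc (∫⁻ x in t \ s, ∫⁻ y in t, ENNReal.ofReal (g ‖y - x‖))
        ≤ ∫⁻ _x in t \ s, I (2*ρ) := by
          refine setLIntegral_mono measurable_const ?_
          intro x hxs
          have hx : x ∈ t := hxs.1
          have hx2 : ‖x‖ < ρ := mem_ball_zero_iff.1 hx
          refine le_trans (hinner x hx) ?_
          rw [← hI (2*ρ) (by linarith)]
          exact hImono _ _ (by linarith)
      _ = I (2*ρ) * volume (t \ s) := setLIntegral_const _ _
  -- finiteness facts
  have hI2top : I (2*ρ) ≠ ⊤ := by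
    rw [hIdef]
    exact ENNReal.mul_ne_top (ENNReal.mul_ne_top (ENNReal.natCast_ne_top N) hωt)
      ENNReal.ofReal_ne_top
  have hvs0 : volume s ≠ 0 := (measure_ball_pos volume _ (by linarith : (0:ℝ) < ρ/2)).ne'
  have hvst : volume s ≠ ⊤ := measure_ball_lt_top.ne
  have hvtt : volume t ≠ ⊤ := measure_ball_lt_top.ne
  -- strict inequality between the two model values
  have hIlt : I (3*ρ/2) < I (2*ρ) := by
    rw [hIdef]
    refine ENNReal.mul_lt_mul_right (by
      simp only [ne_eq, mul_eq_zero, not_or]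
      exact ⟨by exact_mod_cast hN.ne', hω0⟩)
      (ENNReal.mul_ne_top (ENNReal.natCast_ne_top N) hωt) ?_
    rw [ENNReal.ofReal_lt_ofReal_iff (by positivity)]
    have h32 : (0:ℝ) < 3*ρ/2 := by linarith
    have hrp : (3*ρ/2 : ℝ) ^ ((N:ℝ) - α) < (2*ρ) ^ ((N:ℝ) - α) :=
      Real.rpow_lt_rpow h32.le (by linarith) hNα
    gcongr
  have hdiff : volume (t \ s) = volume t - volume s :=
    measure_diff hst measurableSet_ball.nullMeasurableSet hvst
  have hvds : volume (t \ s) ≠ ⊤ := ((measure_mono Set.diff_subset).trans_lt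
    (lt_top_iff_ne_top.2 hvtt)).ne
  have hlt2 : I (3*ρ/2) * volume s + I (2*ρ) * volume (t \ s) < I (2*ρ) * volume t := by
    calc I (3*ρ/2) * volume s + I (2*ρ) * volume (t \ s)
        < I (2*ρ) * volume s + I (2*ρ) * volume (t \ s) :=
          ENNReal.add_lt_add_right (ENNReal.mul_ne_top hI2top hvds)
            (ENNReal.mul_lt_mul_left hvs0 hvst hIlt)
      _ = I (2*ρ) * (volume s + volume (t \ s)) := (mul_add _ _ _).symm
      _ = I (2*ρ) * volume t := by
          rw [hdiff, add_tsub_cancel_of_le (measure_mono hst)]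
  -- the exact value of the upper bound
  have hg0 : 0 ≤ g (3*ρ/ε) := hpos _
  have h3ρε : (0:ℝ) < 3*ρ/ε := by positivity
  have hcg : c = g (3*ρ/ε) * ((3:ℝ)^α * ρ^α / ε^α) := by
    rw [← heq]
    congr 1
    rw [Real.div_rpow (by linarith) hε.le, Real.mul_rpow (by norm_num) hρ.le]
  set ωr := ω.toReal with hωrdef
  have hωr : ω = ENNReal.ofReal ωr := (ENNReal.ofReal_toReal hωt).symm
  have hωrpos : 0 ≤ ωr := ENNReal.toReal_nonneg
  have e1 : volume t = ENNReal.ofReal (ρ^N * ωr) := by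
    rw [ht, Measure.addHaar_ball (volume : Measure E) (0:E) hρ.le, hdim, ← hω, hωr,
      ← ENNReal.ofReal_mul (by positivity)]
  have e2 : I (2*ρ) = ENNReal.ofReal ((N:ℝ) * ωr * (c * (2*ρ)^((N:ℝ)-α)/((N:ℝ)-α))) := by
    simp only [hIdef]
    rw [hωr, ← ENNReal.ofReal_natCast N, ← ENNReal.ofReal_mul (by positivity),
      ← ENNReal.ofReal_mul (by positivity)]
  have hreal : (N:ℝ) * ωr * (c * (2*ρ)^((N:ℝ)-α)/((N:ℝ)-α)) * (ρ^N * ωr)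
      = (3:ℝ)^α * (2:ℝ)^((N:ℝ)-α) * N * ωr^2 * ρ^(2*N) / (ε^α * ((N:ℝ)-α)) * g (3*ρ/ε) := by
    rw [hcg]
    rw [show ((2:ℝ)*ρ)^((N:ℝ)-α) = (2:ℝ)^((N:ℝ)-α) * ρ^((N:ℝ)-α) from
      Real.mul_rpow (by norm_num) hρ.le]
    have hρN : (ρ:ℝ)^α * ρ^((N:ℝ)-α) = ρ^N := by
      rw [← Real.rpow_add hρ, show α + ((N:ℝ)-α) = ((N:ℕ):ℝ) by ring, Real.rpow_natCast]
    rw [show (ρ:ℝ)^(2*N) = ρ^N*ρ^N by rw [two_mul, pow_add], ← hρN]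
    have hεα : (ε:ℝ)^α ≠ 0 := by positivity
    field_simp
  have hfinal : I (2*ρ) * volume t = ENNReal.ofReal
      ((3:ℝ)^α * (2:ℝ)^((N:ℝ)-α) * N * ωr^2 * ρ^(2*N) / (ε^α * ((N:ℝ)-α)) * g (3*ρ/ε)) := by
    rw [e1, e2, ← ENNReal.ofReal_mul (by positivity), hreal]
  calc (∫⁻ x in t, ∫⁻ y in t, ENNReal.ofReal (g ‖y - x‖))
      = (∫⁻ x in s, ∫⁻ y in t, ENNReal.ofReal (g ‖y - x‖)) +
        ∫⁻ x in t \ s, ∫⁻ y in t, ENNReal.ofReal (g ‖y - x‖) := hsplit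
    _ ≤ I (3*ρ/2) * volume s + I (2*ρ) * volume (t \ s) := add_le_add hbound1 hbound2
    _ < I (2*ρ) * volume t := hlt2
    _ = _ := hfinal
end
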